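/- arXiv:1812.06781 — 3 statements merged into one kernel-verified Lean document; each statement's English description precedes it below -/
import Mathlib

section
/- Let G be a topological group acting continuously on topological spaces X' and X, and let f : X' → X be a continuous G-equivariant map (so f(g • p) = g • f(p) for all g ∈ G and p ∈ X'). If X is G-locally retractile, then f is a locally trivial fibration; concretely, every point x ∈ X admits an open neighbourhood U and a homeomorphism e : f⁻¹({x}) × U → f⁻¹(U) such that f(e(p,u)) = u for all p ∈ f⁻¹({x}) and u ∈ U. -/
/-- If `X` is `G`-locally retractile and `f : X' → X` is a continuous
`G`-equivariant map, then `f` is a locally trivial fibration: every point `x : X` has an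
open neighbourhood `U` and a homeomorphism `f ⁻¹' {x} × U ≃ₜ f ⁻¹' U` over `U`. -/
theorem equivariant_map_to_locally_retractile_is_locally_trivial_fibration
    {G X X' : Type*} [Group G] [TopologicalSpace G] [IsTopologicalGroup G]
    [TopologicalSpace X] [TopologicalSpace X'] [MulAction G X] [MulAction G X']
    [ContinuousSMul G X] [ContinuousSMul G X']
    (f : X' → X) (hf : Continuous f)
    (hequiv : ∀ (g : G) (p : X'), f (g • p) = g • f p)
    (hretr : ∀ x : X, ∃ U : Set X, IsOpen U ∧ x ∈ U ∧
      ∃ r : X → G, ContinuousOn r U ∧ r x = 1 ∧ ∀ x' ∈ U, r x' • x = x') :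
    ∀ x : X, ∃ U : Set X, IsOpen U ∧ x ∈ U ∧
      ∃ e : ↥(f ⁻¹' {x}) × ↥U ≃ₜ ↥(f ⁻¹' U),
        ∀ (p : ↥(f ⁻¹' {x})) (u : ↥U), f ((e (p, u) : X')) = (u : X) := by
  intro x
  obtain ⟨U, hU, hxU, r, hr, hrx, hrr⟩ := hretr x
  refine ⟨U, hU, hxU, ?_⟩
  have hfp : ∀ (p : ↥(f ⁻¹' {x})), f (p : X') = x := fun p => p.2
  have htoMem : ∀ (p : ↥(f ⁻¹' {x})) (u : ↥U), f (r (u : X) • (p : X')) = (u : X) := by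
    intro p u
    rw [hequiv, hfp, hrr _ u.2]
  have hinvMem : ∀ (q : ↥(f ⁻¹' U)), f ((r (f (q : X')))⁻¹ • (q : X')) = x := by
    intro q
    rw [hequiv, inv_smul_eq_iff, hrr _ q.2]
  refine ⟨{ toFun := fun pu => ⟨r (pu.2 : X) • (pu.1 : X'), by
              show f _ ∈ U
              rw [htoMem]; exact pu.2.2⟩
            invFun := fun q => (⟨(r (f (q : X')))⁻¹ • (q : X'), hinvMem q⟩,
              ⟨f (q : X'), q.2⟩)
            left_inv := ?_
            right_inv := ?_
            continuous_toFun := ?_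
            continuous_invFun := ?_ }, ?_⟩
  · rintro ⟨p, u⟩
    ext
    · simp only
      rw [htoMem, inv_smul_smul]
    · simp only
      rw [htoMem]
  · rintro ⟨q, hq⟩
    ext
    exact smul_inv_smul _ _
  · apply Continuous.subtype_mk
    exact ((hr.comp_continuous continuous_subtype_val.snd' fun pu => pu.2.2).smul
      (continuous_subtype_val.comp continuous_fst))
  · apply Continuous.prodMk
    · apply Continuous.subtype_mk
      have hc : Continuous fun q : ↥(f ⁻¹' U) => r (f (q : X')) :=
        hr.comp_continuous (hf.comp continuous_subtype_val) fun q => q.2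
      exact (hc.inv).smul continuous_subtype_val
    · exact (hf.comp continuous_subtype_val).subtype_mk _
  · intro p u
    exact htoMem p u
end

section
/- Let X be a metric space and A ⊆ X a closed subset possessing a closed neighbourhood N (that is, N is closed and A is contained in the interior of N) such that A is a strong deformation retract of N: there is a continuous map Φ : N × [0,1] → N with Φ(x,0) = x for all x ∈ N, Φ(x,1) ∈ A for all x ∈ N, and Φ(a,t) = a for all a ∈ A and t ∈ [0,1]. Then X × {0} ∪ A × [0,1] is a strong deformation retract of X × [0,1]: there is a continuous map Ψ : (X × [0,1]) × [0,1] → X × [0,1] with Ψ(z,0) = z for all z, Ψ(z,1) ∈ X × {0} ∪ A × [0,1] for all z, and Ψ(z,t) = z for all z ∈ X × {0} ∪ A × [0,1] and all t ∈ [0,1]. -/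
open unitInterval

/-- Let `X` be a metric space, `A ⊆ X` closed with a closed neighbourhood
`N` (i.e. `A ⊆ interior N`) such that `A` is a strong deformation retract of `N`.
Then `X × {0} ∪ A × [0,1]` is a strong deformation retract of `X × [0,1]`. -/
theorem strong_deformation_retract_of_product
    {X : Type*} [MetricSpace X] (A N : Set X)
    (hA : IsClosed A) (hN : IsClosed N) (hAN : A ⊆ interior N)
    (Φ : ↥N × unitInterval → ↥N) (hΦ : Continuous Φ)
    (hΦ0 : ∀ x : ↥N, Φ (x, 0) = x)
    (hΦ1 : ∀ x : ↥N, (Φ (x, 1) : X) ∈ A)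
    (hΦA : ∀ a : ↥N, (a : X) ∈ A → ∀ t : unitInterval, Φ (a, t) = a) :
    ∃ Ψ : (X × unitInterval) × unitInterval → X × unitInterval,
      Continuous Ψ ∧
      (∀ z, Ψ (z, 0) = z) ∧
      (∀ z, (Ψ (z, 1)).2 = 0 ∨ (Ψ (z, 1)).1 ∈ A) ∧
      (∀ z : X × unitInterval, (z.2 = 0 ∨ z.1 ∈ A) → ∀ t : unitInterval, Ψ (z, t) = z) := by
  classical
  -- helper facts about `projIcc`
  have hproj0 : Set.projIcc (0:ℝ) 1 zero_le_one 0 = 0 := by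
    apply Subtype.ext; simp [Set.projIcc]
  have hproj1 : Set.projIcc (0:ℝ) 1 zero_le_one 1 = 1 := by
    apply Subtype.ext; simp [Set.projIcc]
  have hprojs : ∀ s : unitInterval, Set.projIcc (0:ℝ) 1 zero_le_one (s : ℝ) = s := by
    intro s
    apply Subtype.ext
    simp [Set.projIcc, min_eq_right s.2.2, max_eq_right s.2.1]
  rcases A.eq_empty_or_nonempty with rfl | hAne
  · -- trivial case `A = ∅` : just contract the interval coordinate
    refine ⟨fun p => (p.1.1, Set.projIcc 0 1 zero_le_one ((1 - (p.2 : ℝ)) * (p.1.2 : ℝ))),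
      ?_, ?_, ?_, ?_⟩
    · refine Continuous.prodMk (continuous_fst.comp continuous_fst) ?_
      exact continuous_projIcc.comp
        (((continuous_const.sub (continuous_subtype_val.comp continuous_snd)).mul
          (continuous_subtype_val.comp (continuous_snd.comp continuous_fst))))
    · rintro ⟨x, s⟩
      simp only [Set.Icc.coe_zero, sub_zero, one_mul]
      rw [hprojs]
    · rintro ⟨x, s⟩
      left
      simp only [Set.Icc.coe_one, sub_self, zero_mul]
      rw [hproj0]
    · rintro ⟨x, s⟩ hz t
      rcases hz with hz | hz
      · subst hz
        simp only [Set.Icc.coe_zero, mul_zero]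
        rw [hproj0]
      · exact absurd hz (Set.notMem_empty _)
  -- main case : `A` nonempty
  have hNA : A ⊆ N := hAN.trans interior_subset
  set C : Set X := (interior N)ᶜ with hCdef
  have hCc : IsClosed C := isOpen_interior.isClosed_compl
  -- the function `b`, positive exactly away from the "boundary" obstruction
  set b : X → ℝ := fun x => if C.Nonempty then Metric.infDist x C else 1 with hbdef
  have hb_cont : Continuous b := by
    by_cases hc : C.Nonempty
    · simpa [hbdef, hc] using Metric.continuous_infDist_pt C
    · simpa [hbdef, hc] using continuous_const
  have hb_nonneg : ∀ x, 0 ≤ b x := by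
    intro x
    by_cases hc : C.Nonempty
    · simp [hbdef, hc, Metric.infDist_nonneg]
    · simp [hbdef, hc]
  have hb_pos_int : ∀ x, 0 < b x → x ∈ interior N := by
    intro x hx
    by_cases hc : C.Nonempty
    · simp only [hbdef, if_pos hc] at hx
      by_contra hxn
      have hxC : x ∈ C := hxn
      rw [Metric.infDist_zero_of_mem hxC] at hx
      exact lt_irrefl 0 hx
    · have hCe : C = ∅ := Set.not_nonempty_iff_eq_empty.mp hc
      have : x ∉ C := by simp [hCe]
      simpa [hCdef] using this
  have hb_posA : ∀ x ∈ A, 0 < b x := by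
    intro x hx
    by_cases hc : C.Nonempty
    · simp only [hbdef, if_pos hc]
      have hxC : x ∉ C := by
        simp only [hCdef, Set.mem_compl_iff, not_not]
        exact hAN hx
      exact (hCc.notMem_iff_infDist_pos hc).mp hxC
    · simp [hbdef, hc]
  -- the function `u`
  set dA : X → ℝ := fun x => Metric.infDist x A with hdAdef
  have hdA_cont : Continuous dA := Metric.continuous_infDist_pt A
  have hdA_nonneg : ∀ x, 0 ≤ dA x := fun x => Metric.infDist_nonneg
  have hden : ∀ x, 0 < dA x + b x := by
    intro x
    by_cases hx : x ∈ A
    · have := hb_posA x hx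
      have := hdA_nonneg x
      linarith
    · have : 0 < dA x := (hA.notMem_iff_infDist_pos hAne).mp hx
      have := hb_nonneg x
      linarith
  set u : X → ℝ := fun x => dA x / (dA x + b x) with hudef
  have hu_cont : Continuous u := hdA_cont.div (hdA_cont.add hb_cont) fun x => (hden x).ne'
  have hu_nonneg : ∀ x, 0 ≤ u x := fun x => div_nonneg (hdA_nonneg x) (hden x).le
  have hu_le_one : ∀ x, u x ≤ 1 := by
    intro x
    rw [hudef]
    exact (div_le_one (hden x)).mpr (by have := hb_nonneg x; linarith)
  have huA : ∀ x ∈ A, u x = 0 := by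
    intro x hx
    simp [hudef, hdAdef, Metric.infDist_zero_of_mem hx]
  have huA' : ∀ x, u x = 0 → x ∈ A := by
    intro x hx
    rw [hudef] at hx
    have hz : dA x = 0 := by
      rcases div_eq_zero_iff.mp hx with h | h
      · exact h
      · exact absurd h (hden x).ne'
    exact (hA.mem_iff_infDist_zero hAne).mpr hz
  have hu_lt_int : ∀ x, u x < 1 → x ∈ interior N := by
    intro x hx
    rw [hudef] at hx
    have : dA x < dA x + b x := (div_lt_one (hden x)).mp hx
    exact hb_pos_int x (by linarith)
  -- the cutoff `v`
  set v : X → ℝ := fun x => min 1 (2 - 2 * u x) with hvdef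
  have hv_cont : Continuous v :=
    continuous_const.min (continuous_const.sub (continuous_const.mul hu_cont))
  have hv_memN : ∀ x, v x ≠ 0 → x ∈ N := by
    intro x hx
    by_contra hxn
    have hu1 : u x = 1 := by
      by_contra h
      have : u x < 1 := lt_of_le_of_ne (hu_le_one x) h
      exact hxn (interior_subset (hu_lt_int x this))
    apply hx
    simp [hvdef, hu1]
  have hv_one : ∀ x, u x < 1/2 → v x = 1 := by
    intro x hx
    rw [hvdef]
    exact min_eq_left (by linarith)
  -- the extended deformation `F`
  set F : X → ℝ → X := fun x τ =>
    if hx : x ∈ N then (Φ (⟨x, hx⟩, Set.projIcc 0 1 zero_le_one (τ * v x)) : X) else x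
    with hFdef
  have hF0 : ∀ x, F x 0 = x := by
    intro x
    by_cases hx : x ∈ N
    · simp only [hFdef, dif_pos hx, zero_mul]
      rw [hproj0, hΦ0]
    · simp [hFdef, dif_neg hx]
  have hFA : ∀ x, x ∈ A → ∀ τ : ℝ, F x τ = x := by
    intro x hx τ
    have hxN : x ∈ N := hNA hx
    simp only [hFdef, dif_pos hxN]
    rw [hΦA ⟨x, hxN⟩ hx]
  have hF1 : ∀ x, x ∈ N → v x = 1 → F x 1 ∈ A := by
    intro x hx hvx
    simp only [hFdef, dif_pos hx, hvx, mul_one]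
    rw [hproj1]
    exact hΦ1 ⟨x, hx⟩
  -- continuity of `F`
  have hFsetN : ContinuousOn (fun p : X × ℝ => F p.1 p.2) (N ×ˢ (Set.univ : Set ℝ)) := by
    rw [continuousOn_iff_continuous_restrict]
    have heq : (N ×ˢ (Set.univ : Set ℝ)).domRestrict (fun p : X × ℝ => F p.1 p.2)
        = fun q : ↥(N ×ˢ (Set.univ : Set ℝ)) =>
          (Φ (⟨(q : X × ℝ).1, q.2.1⟩,
            Set.projIcc 0 1 zero_le_one ((q : X × ℝ).2 * v (q : X × ℝ).1)) : X) := by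
      funext q
      simp only [Set.restrict_apply, hFdef]
      exact dif_pos (Set.mem_prod.mp q.2).1
    rw [heq]
    refine continuous_subtype_val.comp (hΦ.comp (Continuous.prodMk ?_ ?_))
    · exact Continuous.subtype_mk (continuous_fst.comp continuous_subtype_val) _
    · exact continuous_projIcc.comp
        ((continuous_snd.comp continuous_subtype_val).mul
          (hv_cont.comp (continuous_fst.comp continuous_subtype_val)))
  have hFsetV : ContinuousOn (fun p : X × ℝ => F p.1 p.2)
      ({x | v x = 0} ×ˢ (Set.univ : Set ℝ)) := by
    refine ContinuousOn.congr continuous_fst.continuousOn ?_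
    rintro ⟨x, τ⟩ hp
    have hvp : v x = 0 := hp.1
    by_cases hx : x ∈ N
    · simp only [hFdef, dif_pos hx, hvp, mul_zero]
      rw [hproj0, hΦ0]
    · simp [hFdef, dif_neg hx]
  have hFc : Continuous (fun p : X × ℝ => F p.1 p.2) := by
    rw [continuous_iff_continuousAt]
    intro p
    have hcover : (N ×ˢ (Set.univ : Set ℝ)) ∪ ({x | v x = 0} ×ˢ (Set.univ : Set ℝ))
        = Set.univ := by
      ext q
      simp only [Set.mem_union, Set.mem_prod, Set.mem_univ, and_true, Set.mem_setOf_eq,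
        iff_true]
      by_cases h : v q.1 = 0
      · exact Or.inr h
      · exact Or.inl (hv_memN q.1 h)
    have h1 : ContinuousWithinAt (fun p : X × ℝ => F p.1 p.2) (N ×ˢ (Set.univ : Set ℝ)) p := by
      by_cases hp : p ∈ N ×ˢ (Set.univ : Set ℝ)
      · exact hFsetN p hp
      · exact continuousWithinAt_of_notMem_closure
          (by rwa [(hN.prod isClosed_univ).closure_eq])
    have h2 : ContinuousWithinAt (fun p : X × ℝ => F p.1 p.2)
        ({x | v x = 0} ×ˢ (Set.univ : Set ℝ)) p := by
      by_cases hp : p ∈ {x | v x = 0} ×ˢ (Set.univ : Set ℝ)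
      · exact hFsetV p hp
      · refine continuousWithinAt_of_notMem_closure ?_
        rwa [IsClosed.closure_eq ((isClosed_eq hv_cont continuous_const).prod isClosed_univ)]
    have h3 := h1.union h2
    rw [hcover] at h3
    rwa [continuousWithinAt_univ] at h3
  -- the map `G`
  set G : X → ℝ → X := fun x s => F x (min 1 (s / u x)) with hGdef
  have hGA : ∀ x, x ∈ A → ∀ s : ℝ, G x s = x := fun x hx s => hFA x hx _
  have hG0 : ∀ x, G x 0 = x := by
    intro x
    simp only [hGdef, zero_div]
    rw [min_eq_right zero_le_one]
    exact hF0 x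
  have hGc : Continuous (fun p : X × ℝ => G p.1 p.2) := by
    rw [continuous_iff_continuousAt]
    rintro ⟨x, s⟩
    by_cases hp : u x = 0
    · -- `x ∈ A` : use the tube lemma and the fact that `Φ` fixes `A`
      have hpA : x ∈ A := huA' _ hp
      have hpN : x ∈ interior N := hAN hpA
      have hxN : x ∈ N := interior_subset hpN
      have hval : G x s = x := hGA _ hpA _
      rw [Metric.continuousAt_iff]
      intro ε hε
      have hopen : IsOpen {q : ↥N × unitInterval | dist (Φ q : X) x < ε} :=
        isOpen_lt ((continuous_subtype_val.comp hΦ).dist continuous_const) continuous_const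
      have hsub : ({(⟨x, hxN⟩ : ↥N)} ×ˢ (Set.univ : Set unitInterval))
          ⊆ {q : ↥N × unitInterval | dist (Φ q : X) x < ε} := by
        rintro ⟨y, t⟩ ⟨hy, -⟩
        have hy' : y = (⟨x, hxN⟩ : ↥N) := hy
        subst hy'
        simp only [Set.mem_setOf_eq]
        rw [hΦA _ hpA]
        simpa using hε
      obtain ⟨U, V, hUo, hVo, hxU, hVuniv, hUV⟩ :=
        generalized_tube_lemma isCompact_singleton isCompact_univ hopen hsub
      obtain ⟨W, hWo, hWeq⟩ := isOpen_induced_iff.mp hUo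
      have hxW : x ∈ W := by
        have h := hxU (Set.mem_singleton _)
        rw [← hWeq] at h
        exact h
      obtain ⟨δ, hδ, hball⟩ := Metric.isOpen_iff.mp (hWo.inter isOpen_interior) x ⟨hxW, hpN⟩
      refine ⟨δ, hδ, ?_⟩
      rintro ⟨y, s'⟩ hdist
      have hy : dist y x < δ := by
        have hle : dist y x ≤ dist ((y, s') : X × ℝ) (x, s) := by
          rw [Prod.dist_eq]; exact le_max_left _ _
        exact lt_of_le_of_lt hle hdist
      have hyW : y ∈ W ∩ interior N := hball (Metric.mem_ball.mpr hy)
      have hyN : y ∈ N := interior_subset hyW.2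
      have hyU : (⟨y, hyN⟩ : ↥N) ∈ U := by
        rw [← hWeq]
        exact hyW.1
      have hGy : G y s' = (Φ ((⟨y, hyN⟩ : ↥N),
          Set.projIcc 0 1 zero_le_one (min 1 (s' / u y) * v y)) : X) := by
        simp only [hGdef, hFdef, dif_pos hyN]
      show dist (G y s') (G x s) < ε
      rw [hGy, hval]
      exact hUV ⟨hyU, hVuniv (Set.mem_univ _)⟩
    · -- `u x ≠ 0` : plain composition of continuous maps
      have hinner : ContinuousAt (fun q : X × ℝ => ((q.1, min 1 (q.2 / u q.1)) : X × ℝ))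
          (x, s) := by
        refine ContinuousAt.prodMk continuousAt_fst ?_
        exact continuousAt_const.min
          (ContinuousAt.div continuousAt_snd ((hu_cont.comp continuous_fst).continuousAt) hp)
      exact (hFc.continuousAt).comp hinner
  -- the function `g`
  set g : X → ℝ → ℝ := fun x s => max 0 (min (s - u x) (s * (1 - 2 * u x))) with hgdef
  have hg_cont : Continuous fun p : X × ℝ => g p.1 p.2 := by
    refine continuous_const.max (Continuous.min ?_ ?_)
    · exact continuous_snd.sub (hu_cont.comp continuous_fst)
    · exact continuous_snd.mul
        (continuous_const.sub (continuous_const.mul (hu_cont.comp continuous_fst)))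
  have hg0 : ∀ x, g x 0 = 0 := by
    intro x
    rw [hgdef]
    simp only [zero_sub, zero_mul]
    rw [max_eq_left]
    exact le_trans (min_le_right _ _) le_rfl
  have hgA : ∀ x, x ∈ A → ∀ s : ℝ, 0 ≤ s → g x s = s := by
    intro x hx s hs
    rw [hgdef]
    simp only [huA x hx, sub_zero, mul_zero, mul_one, min_self]
    exact max_eq_right hs
  -- the homotopy
  refine ⟨fun p => (G p.1.1 ((p.2 : ℝ) * (p.1.2 : ℝ)),
    Set.projIcc 0 1 zero_le_one
      ((1 - (p.2 : ℝ)) * (p.1.2 : ℝ) + (p.2 : ℝ) * g p.1.1 (p.1.2 : ℝ))), ?_, ?_, ?_, ?_⟩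
  · -- continuity
    refine Continuous.prodMk ?_ ?_
    · refine hGc.comp (Continuous.prodMk (continuous_fst.comp continuous_fst) ?_)
      exact (continuous_subtype_val.comp continuous_snd).mul
        (continuous_subtype_val.comp (continuous_snd.comp continuous_fst))
    · refine continuous_projIcc.comp ?_
      refine Continuous.add ?_ ?_
      · exact (continuous_const.sub (continuous_subtype_val.comp continuous_snd)).mul
          (continuous_subtype_val.comp (continuous_snd.comp continuous_fst))
      · refine (continuous_subtype_val.comp continuous_snd).mul ?_
        exact hg_cont.comp (Continuous.prodMk (continuous_fst.comp continuous_fst)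
          (continuous_subtype_val.comp (continuous_snd.comp continuous_fst)))
  · -- `Ψ (z, 0) = z`
    rintro ⟨x, s⟩
    simp only [Set.Icc.coe_zero, zero_mul, sub_zero, one_mul, zero_add, add_zero]
    rw [hG0, hprojs]
  · -- `Ψ (z, 1)` lands in `X × {0} ∪ A × I`
    rintro ⟨x, s⟩
    by_cases hgz : g x (s : ℝ) = 0
    · left
      simp only [Set.Icc.coe_one, sub_self, zero_mul, one_mul, zero_add, hgz]
      exact hproj0
    · right
      have hgpos : 0 < g x (s : ℝ) := by
        rcases lt_or_eq_of_le (le_max_left 0 (min ((s:ℝ) - u x) ((s:ℝ) * (1 - 2 * u x)))) with h | h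
        · exact h
      -- `g x s = max 0 _ ≥ 0`; nonzero means positive
        · exact absurd h.symm hgz
      have hmpos : 0 < min ((s:ℝ) - u x) ((s:ℝ) * (1 - 2 * u x)) := by
        by_contra h
        push_neg at h
        rw [hgdef] at hgz
        exact hgz (max_eq_left h)
      have h1 : 0 < (s:ℝ) - u x := lt_of_lt_of_le hmpos (min_le_left _ _)
      have h2 : 0 < (s:ℝ) * (1 - 2 * u x) := lt_of_lt_of_le hmpos (min_le_right _ _)
      have hspos : 0 < (s:ℝ) := lt_of_le_of_lt (hu_nonneg x) (by linarith)
      have hhalf : u x < 1/2 := by nlinarith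
      simp only [Set.Icc.coe_one, one_mul]
      by_cases hux : u x = 0
      · rw [hGA x (huA' x hux)]
        exact huA' x hux
      · have hupos : 0 < u x := lt_of_le_of_ne (hu_nonneg x) (Ne.symm hux)
        have hdiv : (1:ℝ) ≤ (s:ℝ) / u x := (one_le_div hupos).mpr (by linarith)
        have : G x (s:ℝ) = F x 1 := by
          rw [hGdef]
          simp only
          rw [min_eq_left hdiv]
        rw [this]
        exact hF1 x (interior_subset (hu_lt_int x (by linarith))) (hv_one x hhalf)
  · -- stationarity on `X × {0} ∪ A × I`
    rintro ⟨x, s⟩ hz t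
    rcases hz with hz | hz
    · -- `s = 0`
      have hz' : s = 0 := hz
      have hs0 : (s : ℝ) = 0 := by rw [hz']; rfl
      simp only [hs0, mul_zero, hg0, add_zero]
      rw [hG0, hproj0, hz']
    · -- `x ∈ A`
      simp only
      rw [hGA x hz, hgA x hz (s:ℝ) s.2.1]
      have : (1 - (t:ℝ)) * (s:ℝ) + (t:ℝ) * (s:ℝ) = (s:ℝ) := by ring
      rw [this, hprojs]
end

section
/- Let V be a finite-dimensional complex inner product space, with Hermitian inner product ⟪·,·⟫ conjugate-linear in the first variable, and let ω(u,w) = Im ⟪u,w⟫ be the associated symplectic form (compatible with the complex structure J given by multiplication by i). Let V₂^{symp} = {(u,w) ∈ V × V : ω(u,w) = 1} be the space of symplectic 2-frames of V, and let S = {v ∈ V : ‖v‖ = 1} be the unit sphere, both with the subspace topology. Then the map S → V₂^{symp} sending v to (v, i·v) is well defined (since ω(v, i·v) = ‖v‖² = 1), continuous, and a homotopy equivalence. -/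
open ContinuousMap unitInterval

section Aux
variable {V : Type*} [NormedAddCommGroup V] [InnerProductSpace ℂ V]

private lemma aux_inner_smul_real_left (u w : V) (r : ℝ) :
    (inner ℂ (r • u) w : ℂ) = (r:ℂ) * inner ℂ u w := by
  rw [RCLike.real_smul_eq_coe_smul (K := ℂ), inner_smul_left]; simp

private lemma aux_inner_smul_real_right (u w : V) (r : ℝ) :
    (inner ℂ u (r • w) : ℂ) = (r:ℂ) * inner ℂ u w := by
  rw [RCLike.real_smul_eq_coe_smul (K := ℂ), inner_smul_right]; rfl

private lemma aux_inner_I (v : V) : (inner ℂ v (Complex.I • v) : ℂ).im = ‖v‖^2 := by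
  rw [inner_smul_right, inner_self_eq_norm_sq_to_K]
  simp [← Complex.ofReal_pow]

private lemma aux_ne_zero {p : V × V} (hp : (inner ℂ p.1 p.2 : ℂ).im = 1) : p.1 ≠ 0 := by
  intro h
  rw [h, inner_zero_left] at hp
  simp at hp

private lemma aux_r_pos {t c : ℝ} (h0 : 0 ≤ t) (h1 : t ≤ 1) (hc : 0 < c) :
    0 < (1 - t) + t / c := by
  rcases eq_or_lt_of_le h1 with h | h
  · simp only [h, sub_self, zero_add]; exact div_pos one_pos hc
  · have h3 : 0 ≤ t / c := div_nonneg h0 hc.le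
    linarith

end Aux

/-- Let `V` be a finite-dimensional complex inner product space with
symplectic form `ω(u,w) = Im ⟪u,w⟫`. The map from the unit sphere
`S = {v : ‖v‖ = 1}` to the space of symplectic 2-frames
`V₂^{symp} = {(u,w) : ω(u,w) = 1}` sending `v` to `(v, i • v)` is well defined,
continuous, and a homotopy equivalence. -/
theorem sphere_homotopyEquiv_symplecticFrames
    {V : Type*} [NormedAddCommGroup V] [InnerProductSpace ℂ V] [FiniteDimensional ℂ V] :
    ∃ e : ContinuousMap.HomotopyEquiv
        ↥(Metric.sphere (0 : V) 1)
        ↥{p : V × V | (inner ℂ p.1 p.2 : ℂ).im = 1},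
      ∀ v : ↥(Metric.sphere (0 : V) 1),
        (e.toFun v : V × V) = ((v : V), Complex.I • (v : V)) := by
  classical
  set F : Set (V × V) := {p : V × V | (inner ℂ p.1 p.2 : ℂ).im = 1} with hF
  set S : Set V := Metric.sphere (0 : V) 1 with hS
  have hSn : ∀ v : S, ‖(v:V)‖ = 1 := fun v => mem_sphere_zero_iff_norm.mp v.2
  have hFne : ∀ p : F, ((p:V×V)).1 ≠ 0 := fun p => aux_ne_zero p.2
  have hFnorm : ∀ p : F, ‖((p:V×V)).1‖ ≠ 0 := fun p => norm_ne_zero_iff.mpr (hFne p)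
  -- the forward map
  have hmemφ : ∀ v : S, ((v:V), Complex.I • (v:V)) ∈ F := by
    intro v
    have := aux_inner_I (v:V)
    simp only [hF, Set.mem_setOf_eq, this, hSn v, one_pow]
  let φ : C(S, F) := ⟨fun v => ⟨((v:V), Complex.I • (v:V)), hmemφ v⟩, by
    apply Continuous.subtype_mk
    exact (continuous_subtype_val.prodMk (continuous_const.smul continuous_subtype_val))⟩
  -- the inverse map
  have hmemψ : ∀ p : F, (‖((p:V×V)).1‖⁻¹ • ((p:V×V)).1) ∈ S := by
    intro p
    rw [hS, mem_sphere_zero_iff_norm, norm_smul]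
    simp [hFnorm p, abs_of_nonneg (norm_nonneg _)]
  let ψ : C(F, S) := ⟨fun p => ⟨‖((p:V×V)).1‖⁻¹ • ((p:V×V)).1, hmemψ p⟩, by
    apply Continuous.subtype_mk
    exact ((continuous_subtype_val.fst.norm.inv₀ hFnorm).smul continuous_subtype_val.fst)⟩
  -- ψ ∘ φ = id
  have hψφ : ψ.comp φ = ContinuousMap.id S := by
    ext v
    simp [ψ, φ, hSn v]
  -- the homotopy from id to φ ∘ ψ
  have hmemH : ∀ (p : F) (t : I),
      (((1 - (t:ℝ)) + (t:ℝ) / ‖((p:V×V)).1‖) • ((p:V×V)).1,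
       ((1 - (t:ℝ)) + (t:ℝ) / ‖((p:V×V)).1‖)⁻¹ •
         ((1 - (t:ℝ)) • ((p:V×V)).2 + ((t:ℝ) / ‖((p:V×V)).1‖^2) • (Complex.I • ((p:V×V)).1))) ∈ F := by
    intro p t
    obtain ⟨⟨u, w⟩, hp⟩ := p
    simp only [hF, Set.mem_setOf_eq] at hp ⊢
    have hu : ‖u‖ ≠ 0 := norm_ne_zero_iff.mpr (aux_ne_zero (p := (u,w)) hp)
    have hupos : 0 < ‖u‖ := lt_of_le_of_ne (norm_nonneg u) (Ne.symm hu)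
    set r : ℝ := (1 - (t:ℝ)) + (t:ℝ) / ‖u‖ with hr
    have hrpos : 0 < r := aux_r_pos t.2.1 t.2.2 hupos
    have hrne : r ≠ 0 := ne_of_gt hrpos
    rw [aux_inner_smul_real_left, aux_inner_smul_real_right, inner_add_right,
      aux_inner_smul_real_right, aux_inner_smul_real_right, inner_smul_right,
      inner_self_eq_norm_sq_to_K]
    have key : ((r:ℂ) * ((r⁻¹:ℝ) * ((((1:ℝ) - (t:ℝ) : ℝ):ℂ) * inner ℂ u w +
        (((t:ℝ) / ‖u‖^2 : ℝ):ℂ) * (Complex.I * ((‖u‖:ℂ))^2)))) =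
        ((1 - (t:ℝ)):ℂ) * inner ℂ u w + ((t:ℝ):ℂ) * Complex.I := by
      have h2 : ((‖u‖:ℂ))^2 ≠ 0 := by
        simpa using pow_ne_zero 2 (Complex.ofReal_ne_zero.mpr hu)
      have h3 : (r:ℂ) ≠ 0 := Complex.ofReal_ne_zero.mpr hrne
      have h4 : ((‖u‖:ℂ)) ≠ 0 := Complex.ofReal_ne_zero.mpr hu
      push_cast
      field_simp
    refine (congrArg Complex.im key).trans ?_
    simp [Complex.add_im, Complex.mul_im, hp]
  let Hfun : F × I → F := fun x =>
    ⟨(((1 - (x.2:ℝ)) + (x.2:ℝ) / ‖((x.1:V×V)).1‖) • ((x.1:V×V)).1,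
      ((1 - (x.2:ℝ)) + (x.2:ℝ) / ‖((x.1:V×V)).1‖)⁻¹ •
        ((1 - (x.2:ℝ)) • ((x.1:V×V)).2 +
          ((x.2:ℝ) / ‖((x.1:V×V)).1‖^2) • (Complex.I • ((x.1:V×V)).1))), hmemH x.1 x.2⟩
  have hHcont : Continuous Hfun := by
    apply Continuous.subtype_mk
    have ht : Continuous fun x : F × I => (x.2 : ℝ) := continuous_subtype_val.comp continuous_snd
    have hu : Continuous fun x : F × I => ((x.1:V×V)).1 :=
      continuous_fst.subtype_val.fst
    have hw : Continuous fun x : F × I => ((x.1:V×V)).2 :=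
      continuous_fst.subtype_val.snd
    have hnu : Continuous fun x : F × I => ‖((x.1:V×V)).1‖ := hu.norm
    have hnu0 : ∀ x : F × I, ‖((x.1:V×V)).1‖ ≠ 0 := fun x => hFnorm x.1
    have hr : Continuous fun x : F × I => (1 - (x.2:ℝ)) + (x.2:ℝ) / ‖((x.1:V×V)).1‖ :=
      ((continuous_const.sub ht).add (ht.div hnu hnu0))
    have hnu2 : ∀ x : F × I, ‖((x.1:V×V)).1‖^2 ≠ 0 := fun x => pow_ne_zero 2 (hnu0 x)
    apply Continuous.prodMk
    · exact hr.smul hu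
    · exact (hr.inv₀ (fun x => ne_of_gt (aux_r_pos x.2.2.1 x.2.2.2
        (norm_pos_iff.mpr (hFne x.1))))).smul (((continuous_const.sub ht).smul hw).add
          ((ht.div (hnu.pow 2) hnu2).smul (continuous_const.smul hu)))
  have hH0 : ∀ p : ↥F, Hfun (p, 0) = p := by
    intro p
    apply Subtype.ext
    simp [Hfun]
  have hH1 : ∀ p : ↥F, Hfun (p, 1) = (φ.comp ψ) p := by
    intro p
    apply Subtype.ext
    obtain ⟨⟨u, w⟩, hp⟩ := p
    have hu : ‖u‖ ≠ 0 := norm_ne_zero_iff.mpr (aux_ne_zero (p := (u,w)) hp)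
    simp only [Hfun, φ, ψ, ContinuousMap.comp_apply, ContinuousMap.coe_mk]
    refine Prod.ext ?_ ?_
    · simp [one_div]
    · dsimp only
      simp only [show ((1:unitInterval):ℝ) = 1 from rfl, sub_self, zero_smul, zero_add,
        smul_smul, smul_comm Complex.I]
      congr 1
      field_simp
  let G : ContinuousMap.Homotopy (ContinuousMap.id ↥F) (φ.comp ψ) :=
    { toFun := fun x => Hfun (x.2, x.1)
      continuous_toFun := hHcont.comp (continuous_snd.prodMk continuous_fst)
      map_zero_left := hH0
      map_one_left := hH1 }
  refine ⟨⟨φ, ψ, ?_, ?_⟩, fun v => rfl⟩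
  · rw [hψφ]
  · exact ⟨G.symm⟩
end
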